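/- arXiv:1604.00198 — 3 statements merged into one kernel-verified Lean document; each statement's English description precedes it below -/
import Mathlib

section
/- Let (Ω_1, 𝓜_1, μ_1) and (Ω_2, 𝓜_2, μ_2) be σ-finite measure spaces and let 1 ≤ p_1, p_2 < ∞. Then the iterated (mixed-norm) space L^{p_2}(μ_2; L^{p_1}(μ_1)) — the Bochner space of L^{p_1}(μ_1)-valued functions, whose norm is the mixed norm ( ∫ ( ∫ |f(x_1,x_2)|^{p_1} dμ_1(x_1) )^{p_2/p_1} dμ_2(x_2) )^{1/p_2} — has the metric approximation property. -/
open MeasureTheory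
open scoped ENNReal

set_option linter.unusedSectionVars false
set_option maxHeartbeats 1000000

def HasMetricApproximationProperty (X : Type*) [NormedAddCommGroup X] [NormedSpace ℂ X] : Prop :=
  ∀ K : Set X, IsCompact K → ∀ ε : ℝ, 0 < ε →
    ∃ F : X →L[ℂ] X,
      FiniteDimensional ℂ (LinearMap.range (F : X →ₗ[ℂ] X)) ∧
      ‖F‖ ≤ 1 ∧ ∀ x ∈ K, ‖x - F x‖ < ε

section helpers

variable {Ω : Type*} [MeasurableSpace Ω] {μ : Measure Ω}
variable {E : Type*} [NormedAddCommGroup E] [NormedSpace ℂ E]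
variable {p : ℝ≥0∞}

theorem Lp.coeFn_sum' {ι : Type*} (s : Finset ι) (f : ι → Lp E p μ) :
    ⇑(∑ i ∈ s, f i) =ᵐ[μ] fun ω => ∑ i ∈ s, f i ω := by
  classical
  induction s using Finset.induction_on with
  | empty => simp only [Finset.sum_empty]; exact Lp.coeFn_zero E p μ
  | insert a s hni ih =>
    rw [Finset.sum_insert hni]
    filter_upwards [Lp.coeFn_add (f _) (∑ i ∈ _, f i), ih] with ω h1 h2
    rw [h1]; simp only [Pi.add_apply, h2]; rw [Finset.sum_insert hni]

theorem indicatorConstLp_smul' {s : Set Ω} (hs : MeasurableSet s) (hμs : μ s ≠ ∞)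
    (c : ℂ) (e : E) :
    c • indicatorConstLp p hs hμs e = indicatorConstLp p hs hμs (c • e) := by
  rw [indicatorConstLp, indicatorConstLp, ← MemLp.toLp_const_smul]
  apply MemLp.toLp_congr
  apply Filter.EventuallyEq.of_eq
  funext ω
  by_cases hω : ω ∈ s <;> simp [Set.indicator, hω]

theorem coeFn_sum_indicatorConstLp {ι : Type*} (J : Finset ι) (B : ι → Set Ω)
    (hmeas : ∀ v, MeasurableSet (B v)) (hfin : ∀ v ∈ J, μ (B v) ≠ ∞) (b : ι → E) :
    ⇑(∑ v ∈ J.attach, indicatorConstLp p (hmeas ↑v) (hfin ↑v v.2) (b ↑v))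
      =ᵐ[μ] fun ω => ∑ v ∈ J.attach, (B ↑v).indicator (fun _ => b ↑v) ω := by
  refine (Lp.coeFn_sum' _ _).trans ?_
  have h := Filter.eventually_all_finset (J.attach) (l := ae μ)
    (p := fun v ω => (indicatorConstLp p (hmeas (v:ι)) (hfin (v:ι) v.2) (b (v:ι))) ω
      = (B (v:ι)).indicator (fun _ => b (v:ι)) ω) |>.2
    (fun v _ => indicatorConstLp_coeFn)
  filter_upwards [h] with ω hω
  exact Finset.sum_congr rfl fun v hv => hω v hv

theorem norm_sum_indicatorConstLp_le [CompleteSpace E] [Fact (1 ≤ p)] (hp : p ≠ ∞)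
    {ι : Type*} [DecidableEq ι] (J : Finset ι) (B : ι → Set Ω)
    (hmeas : ∀ v, MeasurableSet (B v))
    (hfin : ∀ v ∈ J, μ (B v) ≠ ∞)
    (hdisj : (J : Set ι).PairwiseDisjoint B)
    (f : Lp E p μ) (b : ι → E)
    (hb : ∀ v ∈ J, ‖b v‖ ≤ (μ (B v)).toReal⁻¹ * ‖∫ ω in B v, f ω ∂μ‖) :
    ‖∑ v ∈ J.attach, indicatorConstLp p (hmeas v) (hfin v v.2) (b v)‖ ≤ ‖f‖ := by
  have hp1 : (1 : ℝ≥0∞) ≤ p := Fact.out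
  have hp0 : p ≠ 0 := by intro h; rw [h] at hp1; simp at hp1
  set pr := p.toReal with hprdef
  have hpr : 0 < pr := ENNReal.toReal_pos hp0 hp
  set φ : Ω → E := fun ω => ∑ v ∈ J.attach, (B ↑v).indicator (fun _ => b ↑v) ω with hφ
  have hcoe : ⇑(∑ v ∈ J.attach, indicatorConstLp p (hmeas ↑v) (hfin ↑v v.2) (b ↑v)) =ᵐ[μ] φ :=
    coeFn_sum_indicatorConstLp J B hmeas hfin b
  rw [Lp.norm_def, Lp.norm_def, eLpNorm_congr_ae hcoe]
  refine ENNReal.toReal_mono (Lp.eLpNorm_ne_top f) ?_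
  rw [eLpNorm_eq_lintegral_rpow_enorm_toReal hp0 hp, eLpNorm_eq_lintegral_rpow_enorm_toReal hp0 hp]
  refine ENNReal.rpow_le_rpow ?_ (by positivity)
  have hpt : ∀ ω, (‖φ ω‖₊ : ℝ≥0∞) ^ pr
      = ∑ v ∈ J.attach, (B ↑v).indicator (fun _ => (‖b ↑v‖₊ : ℝ≥0∞) ^ pr) ω := by
    intro ω
    by_cases hω : ∃ v ∈ J, ω ∈ B v
    · obtain ⟨v, hvJ, hvB⟩ := hω
      have hother : ∀ w : {x // x ∈ J}, w ∈ J.attach → w ≠ ⟨v, hvJ⟩ → ω ∉ B ↑w := by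
        intro w _ hw hmem
        exact Set.disjoint_left.1 (hdisj w.2 hvJ (fun h => hw (Subtype.ext h))) hmem hvB
      have h1 : φ ω = b v := by
        show (∑ w ∈ J.attach, (B ↑w).indicator (fun _ => b ↑w) ω) = b v
        rw [Finset.sum_eq_single_of_mem ⟨v, hvJ⟩ (Finset.mem_attach _ _)
          (fun w hw hne => Set.indicator_of_notMem (hother w hw hne) _)]
        exact Set.indicator_of_mem hvB _
      have h2 : (∑ w ∈ J.attach, (B ↑w).indicator (fun _ => (‖b ↑w‖₊ : ℝ≥0∞) ^ pr) ω)
          = (‖b v‖₊ : ℝ≥0∞) ^ pr := by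
        rw [Finset.sum_eq_single_of_mem ⟨v, hvJ⟩ (Finset.mem_attach _ _)
          (fun w hw hne => Set.indicator_of_notMem (hother w hw hne) _)]
        exact Set.indicator_of_mem hvB _
      rw [h1, h2]
    · push_neg at hω
      have h1 : φ ω = 0 := by
        show (∑ w ∈ J.attach, (B ↑w).indicator (fun _ => b ↑w) ω) = 0
        exact Finset.sum_eq_zero fun w _ => Set.indicator_of_notMem (hω ↑w w.2) _
      have h2 : (∑ w ∈ J.attach, (B ↑w).indicator (fun _ => (‖b ↑w‖₊ : ℝ≥0∞) ^ pr) ω) = 0 :=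
        Finset.sum_eq_zero fun w _ => Set.indicator_of_notMem (hω ↑w w.2) _
      rw [h1, h2]
      simp [ENNReal.zero_rpow_of_pos hpr]
  have hver : ∀ v ∈ J, (‖b v‖₊ : ℝ≥0∞) ^ pr * μ (B v)
      ≤ ∫⁻ ω in B v, (‖f ω‖₊ : ℝ≥0∞) ^ pr ∂μ := by
    intro v hvJ
    set M := μ (B v) with hM
    by_cases hM0 : M = 0
    · simp [hM0]
    have hMtop : M ≠ ∞ := hfin v hvJ
    haveI : IsFiniteMeasure (μ.restrict (B v)) :=
      ⟨by rw [Measure.restrict_apply_univ]; exact lt_top_iff_ne_top.2 hMtop⟩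
    have hInt : Integrable (⇑f) (μ.restrict (B v)) :=
      ((Lp.memLp f).restrict (B v)).integrable hp1
    set Q := ∫⁻ ω in B v, (‖f ω‖₊ : ℝ≥0∞) ^ pr ∂μ with hQdef
    by_cases hQtop : Q = ∞
    · rw [hQtop]; exact le_top
    set I := ∫⁻ ω in B v, (‖f ω‖₊ : ℝ≥0∞) ∂μ with hIdef
    have hI : ENNReal.ofReal (∫ ω in B v, ‖f ω‖ ∂μ) = I :=
      ofReal_integral_norm_eq_lintegral_enorm hInt
    have h2 : (‖b v‖₊ : ℝ≥0∞) ≤ M⁻¹ * I := by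
      rw [show (‖b v‖₊ : ℝ≥0∞) = ENNReal.ofReal ‖b v‖ from (ofReal_norm (b v)).symm, ← hI]
      calc ENNReal.ofReal ‖b v‖
          ≤ ENNReal.ofReal ((M.toReal)⁻¹ * ‖∫ ω in B v, f ω ∂μ‖) :=
            ENNReal.ofReal_le_ofReal (hb v hvJ)
        _ ≤ ENNReal.ofReal ((M.toReal)⁻¹ * ∫ ω in B v, ‖f ω‖ ∂μ) :=
            ENNReal.ofReal_le_ofReal
              (mul_le_mul_of_nonneg_left (norm_integral_le_integral_norm _) (by positivity))
        _ = M⁻¹ * ENNReal.ofReal (∫ ω in B v, ‖f ω‖ ∂μ) := by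
            rw [ENNReal.ofReal_mul (by positivity),
              ENNReal.ofReal_inv_of_pos (ENNReal.toReal_pos hM0 hMtop),
              ENNReal.ofReal_toReal hMtop]
    have h3 : I ≤ Q ^ (1/pr) * M ^ (1 - 1/pr) := by
      have h := eLpNorm_le_eLpNorm_mul_rpow_measure_univ (μ := μ.restrict (B v))
        (p := 1) (q := p) hp1 ((Lp.aestronglyMeasurable f).restrict)
      rw [eLpNorm_one_eq_lintegral_enorm, eLpNorm_eq_lintegral_rpow_enorm_toReal hp0 hp,
        Measure.restrict_apply_univ] at h
      simp only [one_div, ENNReal.toReal_one, inv_one] at h ⊢; exact h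
    have hMpr0 : M ^ pr ≠ 0 := by
      simp only [ne_eq, ENNReal.rpow_eq_zero_iff]
      push_neg
      exact ⟨fun h => absurd h hM0, fun h => absurd h hMtop⟩
    have hMprtop : M ^ pr ≠ ∞ := by
      simp only [ne_eq, ENNReal.rpow_eq_top_iff]
      push_neg
      exact ⟨fun h => absurd h hM0, fun h => absurd h hMtop⟩
    have hmm : M ^ (pr - 1) * M = M ^ pr := by
      nth_rewrite 2 [← ENNReal.rpow_one M]
      rw [← ENNReal.rpow_add _ _ hM0 hMtop, sub_add_cancel]
    have h5 : (M⁻¹ * (Q ^ (1/pr) * M ^ (1 - 1/pr))) ^ pr * M = Q := by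
      rw [ENNReal.mul_rpow_of_nonneg _ _ hpr.le, ENNReal.mul_rpow_of_nonneg _ _ hpr.le,
        ← ENNReal.rpow_mul, ← ENNReal.rpow_mul, one_div, inv_mul_cancel₀ hpr.ne',
        ENNReal.rpow_one, ENNReal.inv_rpow, sub_mul, one_mul, inv_mul_cancel₀ hpr.ne']
      calc (M ^ pr)⁻¹ * (Q * M ^ (pr - 1)) * M
          = (M ^ pr)⁻¹ * (M ^ (pr - 1) * M) * Q := by ring
        _ = Q := by rw [hmm, ENNReal.inv_mul_cancel hMpr0 hMprtop, one_mul]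
    calc (‖b v‖₊ : ℝ≥0∞) ^ pr * M
        ≤ (M⁻¹ * (Q ^ (1/pr) * M ^ (1 - 1/pr))) ^ pr * M := by
          gcongr
          exact h2.trans (by gcongr)
      _ = Q := h5
  calc ∫⁻ ω, (‖φ ω‖₊ : ℝ≥0∞) ^ pr ∂μ
      = ∑ v ∈ J.attach, (‖b ↑v‖₊ : ℝ≥0∞) ^ pr * μ (B ↑v) := by
        rw [lintegral_congr hpt, lintegral_finset_sum]
        · refine Finset.sum_congr rfl fun v _ => ?_
          rw [lintegral_indicator (hmeas _), setLIntegral_const]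
        · exact fun v _ => Measurable.indicator measurable_const (hmeas _)
    _ ≤ ∑ v ∈ J.attach, ∫⁻ ω in B ↑v, (‖f ω‖₊ : ℝ≥0∞) ^ pr ∂μ :=
        Finset.sum_le_sum fun v _ => hver ↑v v.2
    _ ≤ ∫⁻ ω, (‖f ω‖₊ : ℝ≥0∞) ^ pr ∂μ := by
        rw [Finset.sum_attach J fun v => ∫⁻ ω in B v, (‖f ω‖₊ : ℝ≥0∞) ^ pr ∂μ,
          ← lintegral_biUnion_finset hdisj (fun v _ => hmeas v)]
        exact setLIntegral_le_lintegral _ _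

end helpers

theorem hasMAP_Lp {Ω : Type*} [MeasurableSpace Ω] (μ : Measure Ω)
    {E : Type*} [NormedAddCommGroup E] [NormedSpace ℂ E] [CompleteSpace E]
    (p : ℝ≥0∞) [Fact (1 ≤ p)] (hp : p ≠ ∞)
    (hE : HasMetricApproximationProperty E) :
    HasMetricApproximationProperty (Lp E p μ) := by
  classical
  intro K hK ε hε
  have hp1 : (1 : ℝ≥0∞) ≤ p := Fact.out
  have hp0 : p ≠ 0 := by intro h; rw [h] at hp1; simp at hp1
  set pr := p.toReal with hprdef
  have hpr : 0 < pr := ENNReal.toReal_pos hp0 hp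
  -- finite net of simple functions
  obtain ⟨t, htK, htfin, htcover⟩ := hK.finite_cover_balls (show (0:ℝ) < ε/8 by linarith)
  have hchoice : ∀ c : Lp E p μ, ∃ g : Lp.simpleFunc E p μ, dist c ↑g < ε/8 := fun c =>
    Metric.denseRange_iff.1 (Lp.simpleFunc.denseRange (E := E) (μ := μ) (p := p) hp)
      c (ε/8) (by linarith)
  choose σ hσ using hchoice
  set l := htfin.toFinset.toList with hl
  set m := l.length with hm
  set g : Fin m → Lp.simpleFunc E p μ := fun i => σ (l.get i) with hg
  have hnet : ∀ x ∈ K, ∃ i : Fin m, ‖x - ↑(g i)‖ < ε/4 := by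
    intro x hx
    obtain ⟨c, hct, hxc⟩ := Set.mem_iUnion₂.1 (htcover hx)
    have hcl : c ∈ l := by rw [hl]; exact Finset.mem_toList.2 (htfin.mem_toFinset.2 hct)
    obtain ⟨i, hi⟩ := List.mem_iff_get.1 hcl
    refine ⟨i, ?_⟩
    have h1 : dist x c < ε/8 := Metric.mem_ball.1 hxc
    have h2 : dist c ↑(g i) < ε/8 := by rw [hg]; simp only [hi]; exact hσ c
    calc ‖x - ↑(g i)‖ = dist x ↑(g i) := (dist_eq_norm _ _).symm
      _ ≤ dist x c + dist c ↑(g i) := dist_triangle _ _ _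
      _ < ε/8 + ε/8 := by linarith
      _ ≤ ε/4 := by linarith
  set s : Fin m → SimpleFunc Ω E := fun i => Lp.simpleFunc.toSimpleFunc (g i) with hs
  have hsae : ∀ i, ⇑(s i) =ᵐ[μ] ⇑(↑(g i) : Lp E p μ) := fun i =>
    Lp.simpleFunc.toSimpleFunc_eq_toFun (g i)
  set V : Finset (Fin m → E) := Fintype.piFinset fun i => (s i).range with hV
  set J : Finset (Fin m → E) := V.filter (fun v => v ≠ 0) with hJ
  set B : (Fin m → E) → Set Ω := fun v => ⋂ i, (s i) ⁻¹' {v i} with hB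
  have hBmeas : ∀ v, MeasurableSet (B v) := fun v =>
    MeasurableSet.iInter fun i => (s i).measurableSet_fiber _
  have hBfin : ∀ v ∈ J, μ (B v) ≠ ∞ := by
    intro v hv
    obtain ⟨i, hi⟩ := Function.ne_iff.1 (Finset.mem_filter.1 hv).2
    refine ne_top_of_le_ne_top ?_ (measure_mono (Set.iInter_subset _ i))
    exact (SimpleFunc.measure_preimage_lt_top_of_memLp hp0 hp (s i)
      (Lp.simpleFunc.memLp (g i)) (v i) hi).ne
  have hmemB : ∀ v ω, ω ∈ B v ↔ ∀ i, s i ω = v i := by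
    intro v ω
    simp [hB, Set.mem_iInter]
  have hBdisj : (J : Set (Fin m → E)).PairwiseDisjoint B := by
    intro v hv w hw hvw
    refine Set.disjoint_left.2 fun ω hωv hωw => hvw ?_
    funext i
    rw [← (hmemB v ω).1 hωv i, ← (hmemB w ω).1 hωw i]
  -- pointwise decomposition of the simple functions
  have hdecomp : ∀ ω (i : Fin m),
      s i ω = ∑ v ∈ J.attach, (B ↑v).indicator (fun _ => (v : Fin m → E) i) ω := by
    intro ω i
    set w : Fin m → E := fun j => s j ω with hw
    have hωw : ω ∈ B w := (hmemB w ω).2 fun j => rfl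
    have hwV : w ∈ V := Fintype.mem_piFinset.2 fun j => SimpleFunc.mem_range_self _ ω
    have huniq : ∀ v ∈ J, ω ∈ B v → v = w := by
      intro v hv hωv
      funext j
      rw [← (hmemB v ω).1 hωv j]
    by_cases hw0 : w = 0
    · have h1 : s i ω = 0 := by
        have : w i = 0 := by rw [hw0]; rfl
        exact this
      rw [h1]
      refine (Finset.sum_eq_zero fun v _ => ?_).symm
      by_cases hωv : ω ∈ B ↑v
      · exact absurd ((huniq ↑v v.2 hωv).trans hw0) (Finset.mem_filter.1 v.2).2
      · exact Set.indicator_of_notMem hωv _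
    · have hwJ : w ∈ J := Finset.mem_filter.2 ⟨hwV, hw0⟩
      rw [Finset.sum_eq_single_of_mem ⟨w, hwJ⟩ (Finset.mem_attach _ _)
        (fun v _ hne => Set.indicator_of_notMem
          (fun hωv => hne (Subtype.ext (huniq ↑v v.2 hωv))) _)]
      rw [Set.indicator_of_mem hωw]
  -- Lp-level decomposition
  have hgdecomp : ∀ i, (↑(g i) : Lp E p μ)
      = ∑ v ∈ J.attach, indicatorConstLp p (hBmeas ↑v) (hBfin ↑v v.2) ((v : Fin m → E) i) := by
    intro i
    refine (Lp.ext ?_).symm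
    refine (coeFn_sum_indicatorConstLp J B hBmeas hBfin (fun v => v i)).trans ?_
    filter_upwards [hsae i] with ω hω
    rw [← hdecomp ω i, hω]
  -- averages
  haveI hfinmeasB : ∀ v ∈ J, IsFiniteMeasure (μ.restrict (B v)) := fun v hv =>
    ⟨by rw [Measure.restrict_apply_univ]; exact lt_top_iff_ne_top.2 (hBfin v hv)⟩
  set Av : Lp E p μ → (Fin m → E) → E :=
    fun f v => (μ (B v)).toReal⁻¹ • ∫ ω in B v, f ω ∂μ with hAv
  have hIntf : ∀ (f : Lp E p μ), ∀ v ∈ J, Integrable (⇑f) (μ.restrict (B v)) := by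
    intro f v hv
    haveI := hfinmeasB v hv
    exact ((Lp.memLp f).restrict (B v)).integrable hp1
  have hAvadd : ∀ (f f' : Lp E p μ), ∀ v ∈ J, Av (f + f') v = Av f v + Av f' v := by
    intro f f' v hv
    rw [hAv]
    simp only
    rw [← smul_add]
    congr 1
    rw [integral_congr_ae (ae_restrict_of_ae (Lp.coeFn_add f f'))]
    exact integral_add (hIntf f v hv) (hIntf f' v hv)
  have hAvsmul : ∀ (c : ℂ) (f : Lp E p μ), ∀ v ∈ J, Av (c • f) v = c • Av f v := by
    intro c f v hv
    rw [hAv]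
    simp only
    rw [integral_congr_ae (ae_restrict_of_ae (Lp.coeFn_smul c f))]
    simp only [Pi.smul_apply]
    rw [integral_smul, smul_comm]
  -- inner finite-rank operator from MAP of E
  set C : Finset E := J.biUnion (fun v => Finset.image v Finset.univ) with hC
  set D : ℝ := ∑ v ∈ J, (μ (B v)).toReal ^ (1/pr) with hD
  have hD0 : 0 ≤ D := Finset.sum_nonneg fun v _ => Real.rpow_nonneg ENNReal.toReal_nonneg _
  set δ : ℝ := (ε/4) / (D + 1) with hδdef
  have hδ : 0 < δ := by positivity
  obtain ⟨G, hGfin, hGnorm, hGapprox⟩ := hE (↑C) (C.finite_toSet.isCompact) δ hδ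
  -- the averaging operator composed with G
  set Fmap : Lp E p μ →ₗ[ℂ] Lp E p μ :=
    { toFun := fun f => ∑ v ∈ J.attach,
        indicatorConstLp p (hBmeas ↑v) (hBfin ↑v v.2) (G (Av f ↑v)),
      map_add' := fun f f' => by
        rw [← Finset.sum_add_distrib]
        refine Finset.sum_congr rfl fun v _ => ?_
        rw [indicatorConstLp_add, ← map_add, hAvadd f f' ↑v v.2],
      map_smul' := fun c f => by
        simp only [RingHom.id_apply]
        rw [Finset.smul_sum]
        refine Finset.sum_congr rfl fun v _ => ?_
        rw [indicatorConstLp_smul', ← G.map_smul, hAvsmul c f ↑v v.2] } with hFmap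
  have hkey : ∀ f : Lp E p μ, ‖Fmap f‖ ≤ ‖f‖ := by
    intro f
    refine norm_sum_indicatorConstLp_le hp J B hBmeas hBfin hBdisj f
      (fun v => G (Av f v)) (fun v hv => ?_)
    calc ‖G (Av f v)‖ ≤ ‖G‖ * ‖Av f v‖ := G.le_opNorm _
      _ ≤ 1 * ‖Av f v‖ := mul_le_mul_of_nonneg_right hGnorm (norm_nonneg _)
      _ = ‖(μ (B v)).toReal⁻¹ • ∫ ω in B v, f ω ∂μ‖ := by rw [one_mul]
      _ = (μ (B v)).toReal⁻¹ * ‖∫ ω in B v, f ω ∂μ‖ := by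
          rw [norm_smul, Real.norm_eq_abs, abs_of_nonneg (by positivity)]
  set F : Lp E p μ →L[ℂ] Lp E p μ :=
    Fmap.mkContinuous 1 (fun f => by simpa using hkey f) with hF
  have hFapply : ∀ f, F f = Fmap f := fun f => rfl
  have hFnorm : ‖F‖ ≤ 1 := Fmap.mkContinuous_norm_le zero_le_one _
  refine ⟨F, ?_, hFnorm, ?_⟩
  · -- finite rank
    haveI := hGfin
    set T : ({v // v ∈ J} → LinearMap.range (G : E →ₗ[ℂ] E)) →ₗ[ℂ] Lp E p μ :=
      { toFun := fun a => ∑ v ∈ J.attach,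
          indicatorConstLp p (hBmeas ↑v) (hBfin ↑v v.2) ((a v : E))
        map_add' := fun a b => by
          rw [← Finset.sum_add_distrib]
          exact Finset.sum_congr rfl fun v _ => by
            rw [indicatorConstLp_add]; rfl
        map_smul' := fun c a => by
          simp only [RingHom.id_apply]
          rw [Finset.smul_sum]
          exact Finset.sum_congr rfl fun v _ => by
            rw [indicatorConstLp_smul']; rfl } with hT
    refine Submodule.finiteDimensional_of_le
      (?_ : LinearMap.range (F : Lp E p μ →ₗ[ℂ] Lp E p μ) ≤ LinearMap.range T)
    rintro y ⟨f, rfl⟩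
    exact ⟨fun v => ⟨G (Av f ↑v), LinearMap.mem_range_self _ _⟩, rfl⟩
  · -- approximation on K
    intro x hx
    obtain ⟨i, hi⟩ := hnet x hx
    have hdiff : (↑(g i) : Lp E p μ) - F ↑(g i)
        = ∑ v ∈ J.attach, indicatorConstLp p (hBmeas ↑v) (hBfin ↑v v.2)
            ((v : Fin m → E) i - G (Av ↑(g i) ↑v)) := by
      have : (↑(g i) : Lp E p μ) - F ↑(g i)
          = ∑ v ∈ J.attach, (indicatorConstLp p (hBmeas ↑v) (hBfin ↑v v.2) ((v : Fin m → E) i)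
            - indicatorConstLp p (hBmeas ↑v) (hBfin ↑v v.2) (G (Av ↑(g i) ↑v))) := by
        rw [Finset.sum_sub_distrib, ← hgdecomp i, hFapply]
        rfl
      rw [this]
      exact Finset.sum_congr rfl fun v _ => indicatorConstLp_sub
    have hgFg : ‖(↑(g i) : Lp E p μ) - F ↑(g i)‖ ≤ δ * D := by
      rw [hdiff]
      calc ‖∑ v ∈ J.attach, indicatorConstLp p (hBmeas ↑v) (hBfin ↑v v.2)
            ((v : Fin m → E) i - G (Av ↑(g i) ↑v))‖
          ≤ ∑ v ∈ J.attach, ‖indicatorConstLp p (hBmeas ↑v) (hBfin ↑v v.2)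
            ((v : Fin m → E) i - G (Av ↑(g i) ↑v))‖ := norm_sum_le _ _
        _ ≤ ∑ v ∈ J.attach, δ * (μ (B ↑v)).toReal ^ (1/pr) := by
            refine Finset.sum_le_sum fun v _ => ?_
            rw [norm_indicatorConstLp hp0 hp]
            by_cases hμv : μ (B ↑v) = 0
            · have h0 : (μ (B ↑v)).toReal = 0 := by rw [hμv]; simp
              rw [h0, Real.zero_rpow (one_div_ne_zero hpr.ne'), mul_zero, measureReal_def, h0,
                  Real.zero_rpow (one_div_ne_zero hpr.ne'), mul_zero]
            · have hAvg : Av ↑(g i) ↑v = (v : Fin m → E) i := by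
                have h1 : ∫ ω in B ↑v, (↑(g i) : Lp E p μ) ω ∂μ = ∫ ω in B ↑v, s i ω ∂μ :=
                  (integral_congr_ae (ae_restrict_of_ae (hsae i))).symm
                have h2 : ∫ ω in B ↑v, s i ω ∂μ
                    = (μ (B ↑v)).toReal • (v : Fin m → E) i := by
                  rw [setIntegral_congr_fun (hBmeas ↑v)
                    (fun ω hω => (hmemB ↑v ω).1 hω i), setIntegral_const]
                  rfl
                rw [hAv]
                simp only
                rw [h1, h2, smul_smul, inv_mul_cancel₀
                  (ENNReal.toReal_ne_zero.2 ⟨hμv, hBfin ↑v v.2⟩), one_smul]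
              have hmemC : (v : Fin m → E) i ∈ (↑C : Set E) :=
                Finset.mem_coe.2 (Finset.mem_biUnion.2
                  ⟨↑v, v.2, Finset.mem_image.2 ⟨i, Finset.mem_univ i, rfl⟩⟩)
              rw [hAvg]
              exact mul_le_mul_of_nonneg_right (le_of_lt (hGapprox _ hmemC))
                (Real.rpow_nonneg ENNReal.toReal_nonneg _)
        _ = δ * D := by
            rw [← Finset.mul_sum]
            congr 1
            exact Finset.sum_attach J fun v => (μ (B v)).toReal ^ (1/pr)
    have hδD : δ * D ≤ ε/4 := by
      have h1 : δ * D ≤ δ * (D + 1) := mul_le_mul_of_nonneg_left (by linarith) hδ.le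
      have h2 : δ * (D + 1) = ε/4 := by
        rw [hδdef, div_mul_cancel₀]
        positivity
      linarith
    have hFx : ‖F ↑(g i) - F x‖ ≤ ‖x - ↑(g i)‖ := by
      rw [← map_sub]
      calc ‖F ((↑(g i) : Lp E p μ) - x)‖ ≤ ‖F‖ * ‖(↑(g i) : Lp E p μ) - x‖ := F.le_opNorm _
        _ ≤ 1 * ‖(↑(g i) : Lp E p μ) - x‖ :=
            mul_le_mul_of_nonneg_right hFnorm (norm_nonneg _)
        _ = ‖x - ↑(g i)‖ := by rw [one_mul, norm_sub_rev]
    have habc : x - F x = (x - ↑(g i)) + ((↑(g i) : Lp E p μ) - F ↑(g i))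
        + (F ↑(g i) - F x) := by abel
    calc ‖x - F x‖ ≤ ‖x - ↑(g i)‖ + ‖(↑(g i) : Lp E p μ) - F ↑(g i)‖
          + ‖F ↑(g i) - F x‖ := by rw [habc]; exact norm_add₃_le
      _ < ε := by linarith


theorem hasMAP_complex : HasMetricApproximationProperty ℂ := by
  intro K hK ε hε
  refine ⟨ContinuousLinearMap.id ℂ ℂ, ?_, ContinuousLinearMap.norm_id_le, fun x hx => ?_⟩
  · infer_instance
  · simpa using hε

/-- For σ-finite measure spaces `(Ω₁, μ₁)`, `(Ω₂, μ₂)` and `1 ≤ p₁, p₂ < ∞`, the mixed-norm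
space `L^{p₂}(μ₂; L^{p₁}(μ₁))` has the metric approximation property. -/
theorem mixed_norm_lp_metric_approximation_property
    {Ω₁ Ω₂ : Type*} [MeasurableSpace Ω₁] [MeasurableSpace Ω₂]
    (μ₁ : Measure Ω₁) [SigmaFinite μ₁] (μ₂ : Measure Ω₂) [SigmaFinite μ₂]
    (p₁ p₂ : ℝ≥0∞) [Fact (1 ≤ p₁)] [Fact (1 ≤ p₂)] (hp₁ : p₁ ≠ ∞) (hp₂ : p₂ ≠ ∞) :
    HasMetricApproximationProperty (Lp (Lp ℂ p₁ μ₁) p₂ μ₂) :=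
  hasMAP_Lp μ₂ p₂ hp₂ (hasMAP_Lp μ₁ p₁ hp₁ hasMAP_complex)
end

section
/- Let d ≥ 1, let 𝕋^d = (ℝ/ℤ)^d be the d-dimensional torus with its Haar (Lebesgue) probability measure, let 1 ≤ p, q < ∞ with 1/p + 1/p' = 1, and let 0 < r ≤ 1. Let α ∈ L^{p'}(𝕋^d) ∩ L^q(𝕋^d) and let σ : ℤ^d → ℂ satisfy Σ_{ξ ∈ ℤ^d} |σ(ξ)|^r < ∞. Then the operator α T_σ defined by (α T_σ f)(x) = α(x) Σ_{ξ ∈ ℤ^d} σ(ξ) 𝓕f(ξ) e^{2πi x·ξ}, where 𝓕f(ξ) = ∫_{𝕋^d} f(y) e^{−2πi y·ξ} dy, is a well-defined bounded linear operator from L^p(𝕋^d) to L^q(𝕋^d) and is r-nuclear. -/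
open MeasureTheory
open scoped ENNReal

/-- For `0 < r ≤ 1`, a bounded operator `T : X → Y` between Banach spaces is `r`-nuclear if
there exist a sequence `(x'_n)` in the dual `X'` and a sequence `(y_n)` in `Y` with
`Σ_n ‖x'_n‖^r ‖y_n‖^r < ∞` and `T x = Σ_n ⟨x, x'_n⟩ y_n` for all `x ∈ X`. -/
def IsRNuclear (r : ℝ) {X Y : Type*} [NormedAddCommGroup X] [NormedSpace ℂ X]
    [NormedAddCommGroup Y] [NormedSpace ℂ Y] (T : X →L[ℂ] Y) : Prop :=
  ∃ (x' : ℕ → (X →L[ℂ] ℂ)) (y : ℕ → Y),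
    Summable (fun n => ‖x' n‖ ^ r * ‖y n‖ ^ r) ∧
    ∀ x : X, HasSum (fun n => (x' n x) • y n) (T x)

/-- The character `x ↦ e^{2πi x·ξ}` on the torus `𝕋^d = (ℝ/ℤ)^d`, for `ξ ∈ ℤ^d`. -/
noncomputable def torusChar {d : ℕ} (ξ : Fin d → ℤ) (x : Fin d → AddCircle (1 : ℝ)) : ℂ :=
  ∏ i, fourier (ξ i) (x i)

/-- The Fourier coefficient `𝓕f(ξ) = ∫_{𝕋^d} f(y) e^{-2πi y·ξ} dy`. -/
noncomputable def torusFourierCoeff {d : ℕ} (f : (Fin d → AddCircle (1 : ℝ)) → ℂ)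
    (ξ : Fin d → ℤ) : ℂ :=
  ∫ y, f y * torusChar (-ξ) y

namespace RNuclearAux

open Filter

variable {d : ℕ}

lemma norm_torusChar (ξ : Fin d → ℤ) (x : Fin d → AddCircle (1 : ℝ)) : ‖torusChar ξ x‖ = 1 := by
  rw [torusChar, norm_prod]; simp [Circle.norm_coe]

lemma continuous_torusChar (ξ : Fin d → ℤ) : Continuous (torusChar ξ) :=
  continuous_finset_prod _ fun i _ => (fourier (ξ i)).continuous.comp (continuous_apply i)

instance : IsProbabilityMeasure (volume : Measure (AddCircle (1 : ℝ))) :=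
  ⟨by simp [AddCircle.measure_univ]⟩

variable (p : ℝ≥0∞) [Fact (1 ≤ p)]

lemma integrable' (f : Lp ℂ p (volume : Measure (Fin d → AddCircle (1 : ℝ)))) :
    Integrable (f : (Fin d → AddCircle (1 : ℝ)) → ℂ) volume :=
  memLp_one_iff_integrable.mp ((Lp.memLp f).mono_exponent (Fact.out : 1 ≤ p))

lemma integrable_mul_char (f : Lp ℂ p (volume : Measure (Fin d → AddCircle (1 : ℝ))))
    (ξ : Fin d → ℤ) :
    Integrable (fun y => (f : (Fin d → AddCircle (1 : ℝ)) → ℂ) y * torusChar ξ y) volume := by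
  have := (integrable' p f).bdd_mul ((continuous_torusChar ξ).aestronglyMeasurable)
    (c := 1) (ae_of_all _ fun x => le_of_eq (norm_torusChar ξ x))
  simpa [mul_comm] using this

lemma norm_coeff_le (f : Lp ℂ p (volume : Measure (Fin d → AddCircle (1 : ℝ))))
    (ξ : Fin d → ℤ) :
    ‖torusFourierCoeff (f : (Fin d → AddCircle (1 : ℝ)) → ℂ) ξ‖ ≤ ‖f‖ := by
  have h1 : ‖torusFourierCoeff (f : (Fin d → AddCircle (1 : ℝ)) → ℂ) ξ‖ ≤
      ∫ y, ‖(f : (Fin d → AddCircle (1 : ℝ)) → ℂ) y‖ := by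
    rw [torusFourierCoeff]
    refine (norm_integral_le_integral_norm _).trans_eq ?_
    refine integral_congr_ae (Eventually.of_forall fun y => ?_)
    simp only []; rw [norm_mul, norm_torusChar, mul_one]
  refine h1.trans ?_
  have h2 : ∫ y, ‖(f : (Fin d → AddCircle (1 : ℝ)) → ℂ) y‖ =
      ((eLpNorm (f : (Fin d → AddCircle (1 : ℝ)) → ℂ) 1 volume).toReal) := by
    rw [eLpNorm_one_eq_lintegral_enorm,
      integral_norm_eq_lintegral_enorm (Lp.aestronglyMeasurable f)]
  rw [h2, Lp.norm_def]
  refine ENNReal.toReal_mono (Lp.eLpNorm_ne_top f) ?_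
  exact eLpNorm_le_eLpNorm_of_exponent_le (Fact.out : 1 ≤ p) (Lp.aestronglyMeasurable f)

/-- The Fourier coefficient functional `f ↦ 𝓕f(ξ)` as a continuous linear functional on `Lp`. -/
noncomputable def coeffCLM (ξ : Fin d → ℤ) :
    Lp ℂ p (volume : Measure (Fin d → AddCircle (1 : ℝ))) →L[ℂ] ℂ :=
  LinearMap.mkContinuous
    { toFun := fun f => torusFourierCoeff (f : (Fin d → AddCircle (1 : ℝ)) → ℂ) ξ
      map_add' := fun f g => by
        simp only [torusFourierCoeff]
        rw [← integral_add (integrable_mul_char p f _) (integrable_mul_char p g _)]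
        refine integral_congr_ae ?_
        filter_upwards [Lp.coeFn_add f g] with y hy
        simp only [hy, Pi.add_apply]; ring
      map_smul' := fun c f => by
        simp only [torusFourierCoeff, RingHom.id_apply]
        rw [← integral_smul]
        refine integral_congr_ae ?_
        filter_upwards [Lp.coeFn_smul c f] with y hy
        simp only [hy, Pi.smul_apply, smul_eq_mul]; ring }
    1 (fun f => by simpa using norm_coeff_le p f ξ)

lemma coeffCLM_apply (ξ : Fin d → ℤ)
    (f : Lp ℂ p (volume : Measure (Fin d → AddCircle (1 : ℝ)))) :
    coeffCLM p ξ f = torusFourierCoeff (f : (Fin d → AddCircle (1 : ℝ)) → ℂ) ξ := rfl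

lemma norm_coeffCLM_le (ξ : Fin d → ℤ) : ‖(coeffCLM p ξ :
    Lp ℂ p (volume : Measure (Fin d → AddCircle (1 : ℝ))) →L[ℂ] ℂ)‖ ≤ 1 :=
  LinearMap.mkContinuous_norm_le _ zero_le_one _

variable (q : ℝ≥0∞) [Fact (1 ≤ q)] {α : (Fin d → AddCircle (1 : ℝ)) → ℂ}

lemma memℒp_mul_char (hα : MemLp α q (volume : Measure (Fin d → AddCircle (1 : ℝ))))
    (ξ : Fin d → ℤ) :
    MemLp (fun x => α x * torusChar ξ x) q (volume : Measure (Fin d → AddCircle (1 : ℝ))) :=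
  MemLp.of_le hα (hα.1.mul (continuous_torusChar ξ).aestronglyMeasurable)
    (Eventually.of_forall fun x => by rw [norm_mul, norm_torusChar, mul_one])

/-- `α · e^{2πi x·ξ}` as an element of `Lq`. -/
noncomputable def charLp (hα : MemLp α q (volume : Measure (Fin d → AddCircle (1 : ℝ))))
    (ξ : Fin d → ℤ) : Lp ℂ q (volume : Measure (Fin d → AddCircle (1 : ℝ))) :=
  (memℒp_mul_char q hα ξ).toLp _

lemma norm_charLp (hα : MemLp α q (volume : Measure (Fin d → AddCircle (1 : ℝ))))
    (ξ : Fin d → ℤ) :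
    ‖charLp q hα ξ‖ = (eLpNorm α q (volume : Measure (Fin d → AddCircle (1 : ℝ)))).toReal := by
  rw [charLp, Lp.norm_toLp]
  congr 1
  refine le_antisymm (eLpNorm_mono fun x => ?_) (eLpNorm_mono fun x => ?_) <;>
    rw [norm_mul, norm_torusChar, mul_one]

end RNuclearAux

namespace RNuclearAux

open Filter Topology

variable {d : ℕ} (p q : ℝ≥0∞) [Fact (1 ≤ p)] [Fact (1 ≤ q)]
  {α : (Fin d → AddCircle (1 : ℝ)) → ℂ} {σ : (Fin d → ℤ) → ℂ}

lemma summable_c (hσ1 : Summable fun ξ => ‖σ ξ‖)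
    (f : Lp ℂ p (volume : Measure (Fin d → AddCircle (1 : ℝ)))) :
    Summable fun ξ => ‖σ ξ * torusFourierCoeff (f : (Fin d → AddCircle (1 : ℝ)) → ℂ) ξ‖ := by
  refine Summable.of_nonneg_of_le (fun ξ => norm_nonneg _) (fun ξ => ?_) (hσ1.mul_right ‖f‖)
  rw [norm_mul]
  exact mul_le_mul_of_nonneg_left (norm_coeff_le p f ξ) (norm_nonneg _)

lemma summable_term (hσ1 : Summable fun ξ => ‖σ ξ‖)
    (f : Lp ℂ p (volume : Measure (Fin d → AddCircle (1 : ℝ))))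
    (x : Fin d → AddCircle (1 : ℝ)) :
    Summable fun ξ =>
      σ ξ * torusFourierCoeff (f : (Fin d → AddCircle (1 : ℝ)) → ℂ) ξ * torusChar ξ x := by
  refine Summable.of_norm ?_
  have : ∀ ξ, ‖σ ξ * torusFourierCoeff (f : (Fin d → AddCircle (1 : ℝ)) → ℂ) ξ * torusChar ξ x‖
      = ‖σ ξ * torusFourierCoeff (f : (Fin d → AddCircle (1 : ℝ)) → ℂ) ξ‖ := fun ξ => by
    rw [norm_mul, norm_torusChar, mul_one]
  simpa only [this] using summable_c p hσ1 f

lemma continuous_gsum (hσ1 : Summable fun ξ => ‖σ ξ‖)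
    (f : Lp ℂ p (volume : Measure (Fin d → AddCircle (1 : ℝ)))) :
    Continuous fun x =>
      ∑' ξ, σ ξ * torusFourierCoeff (f : (Fin d → AddCircle (1 : ℝ)) → ℂ) ξ * torusChar ξ x := by
  refine continuous_tsum (fun ξ => continuous_const.mul (continuous_torusChar ξ))
    (summable_c p hσ1 f) (fun ξ x => ?_)
  rw [norm_mul, norm_torusChar, mul_one]

lemma norm_gsum_le (hσ1 : Summable fun ξ => ‖σ ξ‖)
    (f : Lp ℂ p (volume : Measure (Fin d → AddCircle (1 : ℝ))))
    (x : Fin d → AddCircle (1 : ℝ)) :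
    ‖∑' ξ, σ ξ * torusFourierCoeff (f : (Fin d → AddCircle (1 : ℝ)) → ℂ) ξ * torusChar ξ x‖
      ≤ (∑' ξ, ‖σ ξ‖) * ‖f‖ := by
  refine le_trans (norm_tsum_le_tsum_norm ?_) ?_
  · have : ∀ ξ, ‖σ ξ * torusFourierCoeff (f : (Fin d → AddCircle (1 : ℝ)) → ℂ) ξ * torusChar ξ x‖
        = ‖σ ξ * torusFourierCoeff (f : (Fin d → AddCircle (1 : ℝ)) → ℂ) ξ‖ := fun ξ => by
      rw [norm_mul, norm_torusChar, mul_one]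
    simpa only [this] using summable_c p hσ1 f
  · rw [← tsum_mul_right]
    refine Summable.tsum_le_tsum (fun ξ => ?_) ?_ (hσ1.mul_right ‖f‖)
    · rw [norm_mul, norm_torusChar, mul_one, norm_mul]
      exact mul_le_mul_of_nonneg_left (norm_coeff_le p f ξ) (norm_nonneg _)
    · have : ∀ ξ, ‖σ ξ * torusFourierCoeff (f : (Fin d → AddCircle (1 : ℝ)) → ℂ) ξ * torusChar ξ x‖
          = ‖σ ξ * torusFourierCoeff (f : (Fin d → AddCircle (1 : ℝ)) → ℂ) ξ‖ := fun ξ => by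
        rw [norm_mul, norm_torusChar, mul_one]
      simpa only [this] using summable_c p hσ1 f

lemma eLpNorm_alpha_mul_le (hα : AEStronglyMeasurable α (volume : Measure (Fin d → AddCircle (1 : ℝ))))
    (g : (Fin d → AddCircle (1 : ℝ)) → ℂ) (C : ℝ) (hC : 0 ≤ C) (h : ∀ x, ‖g x‖ ≤ C) :
    eLpNorm (fun x => α x * g x) q (volume : Measure (Fin d → AddCircle (1 : ℝ)))
      ≤ ENNReal.ofReal C * eLpNorm α q volume := by
  have h1 : eLpNorm (fun x => α x * g x) q (volume : Measure (Fin d → AddCircle (1 : ℝ)))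
      ≤ eLpNorm (C • α) q volume := by
    refine eLpNorm_mono fun x => ?_
    rw [Pi.smul_apply, norm_smul, Real.norm_eq_abs, abs_of_nonneg hC, norm_mul, mul_comm ‖α x‖]
    exact mul_le_mul_of_nonneg_right (h x) (norm_nonneg _)
  refine h1.trans_eq ?_
  rw [eLpNorm_const_smul, ← Real.enorm_eq_ofReal hC]

lemma memG (hα : MemLp α q (volume : Measure (Fin d → AddCircle (1 : ℝ))))
    (hσ1 : Summable fun ξ => ‖σ ξ‖)
    (f : Lp ℂ p (volume : Measure (Fin d → AddCircle (1 : ℝ)))) :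
    MemLp (fun x => α x *
        ∑' ξ, σ ξ * torusFourierCoeff (f : (Fin d → AddCircle (1 : ℝ)) → ℂ) ξ * torusChar ξ x)
      q (volume : Measure (Fin d → AddCircle (1 : ℝ))) := by
  have hS : (0:ℝ) ≤ (∑' ξ, ‖σ ξ‖) * ‖f‖ :=
    mul_nonneg (tsum_nonneg fun _ => norm_nonneg _) (norm_nonneg _)
  refine MemLp.of_le (hα.const_smul (((∑' ξ, ‖σ ξ‖) * ‖f‖ : ℝ)))
    (hα.1.mul (continuous_gsum p hσ1 f).aestronglyMeasurable)
    (Eventually.of_forall fun x => ?_)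
  rw [Pi.smul_apply, norm_smul, Real.norm_eq_abs, abs_of_nonneg hS, norm_mul, mul_comm ‖α x‖]
  exact mul_le_mul_of_nonneg_right (norm_gsum_le p hσ1 f x) (norm_nonneg _)

lemma mem_psum (hα : MemLp α q (volume : Measure (Fin d → AddCircle (1 : ℝ))))
    (f : Lp ℂ p (volume : Measure (Fin d → AddCircle (1 : ℝ))))
    (s : Finset (Fin d → ℤ)) :
    MemLp (fun x => ∑ ξ ∈ s,
        σ ξ * torusFourierCoeff (f : (Fin d → AddCircle (1 : ℝ)) → ℂ) ξ * (α x * torusChar ξ x))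
      q (volume : Measure (Fin d → AddCircle (1 : ℝ))) :=
  memLp_finset_sum s fun ξ _ => (memℒp_mul_char q hα ξ).const_mul _

lemma sum_toLp (hα : MemLp α q (volume : Measure (Fin d → AddCircle (1 : ℝ))))
    (f : Lp ℂ p (volume : Measure (Fin d → AddCircle (1 : ℝ))))
    (s : Finset (Fin d → ℤ)) :
    ∑ ξ ∈ s, (σ ξ * coeffCLM p ξ f) • charLp q hα ξ = (mem_psum p q hα f s).toLp
      (fun x => ∑ ξ ∈ s,
        σ ξ * torusFourierCoeff (f : (Fin d → AddCircle (1 : ℝ)) → ℂ) ξ * (α x * torusChar ξ x)) := by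
  classical
  induction s using Finset.induction_on with
  | empty =>
    rw [Finset.sum_empty]
    refine ((MemLp.toLp_zero (MemLp.zero : MemLp (0 : (Fin d → AddCircle (1:ℝ)) → ℂ) q volume)).symm).trans ?_
    exact MemLp.toLp_congr _ _ (Eventually.of_forall fun x => by simp)
  | insert a s ha ih =>
    rw [Finset.sum_insert ha, ih]
    have h1 : (σ a * coeffCLM p a f) • charLp q hα a =
        ((memℒp_mul_char q hα a).const_mul
          (σ a * torusFourierCoeff (f : (Fin d → AddCircle (1 : ℝ)) → ℂ) a)).toLp _ := by
      rw [charLp, coeffCLM_apply, ← MemLp.toLp_const_smul]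
      exact MemLp.toLp_congr _ _ (Eventually.of_forall fun x => by
        simp [smul_eq_mul])
    rw [h1, ← MemLp.toLp_add]
    refine MemLp.toLp_congr _ _ (Eventually.of_forall fun x => ?_)
    simp only [Pi.add_apply]
    rw [Finset.sum_insert ha]

end RNuclearAux

namespace RNuclearAux

open Filter Topology

theorem core {d : ℕ} (p q : ℝ≥0∞) [Fact (1 ≤ p)] [Fact (1 ≤ q)]
    {α : (Fin d → AddCircle (1 : ℝ)) → ℂ}
    (hα : MemLp α q (volume : Measure (Fin d → AddCircle (1 : ℝ))))
    {σ : (Fin d → ℤ) → ℂ} (hσ1 : Summable fun ξ => ‖σ ξ‖) :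
    ∃ T : Lp ℂ p (volume : Measure (Fin d → AddCircle (1 : ℝ))) →L[ℂ] Lp ℂ q volume,
      (∀ f : Lp ℂ p (volume : Measure (Fin d → AddCircle (1 : ℝ))),
        (T f : (Fin d → AddCircle (1 : ℝ)) → ℂ) =ᵐ[volume] fun x => α x *
          ∑' ξ, σ ξ * torusFourierCoeff (f : (Fin d → AddCircle (1 : ℝ)) → ℂ) ξ * torusChar ξ x) ∧
      (∀ f, HasSum (fun ξ => (σ ξ * coeffCLM p ξ f) • charLp q hα ξ) (T f)) := by
  classical
  set G : Lp ℂ p (volume : Measure (Fin d → AddCircle (1 : ℝ))) →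
      (Fin d → AddCircle (1 : ℝ)) → ℂ := fun f x =>
    α x * ∑' ξ, σ ξ * torusFourierCoeff (f : (Fin d → AddCircle (1 : ℝ)) → ℂ) ξ * torusChar ξ x
    with hG
  have hGadd : ∀ f g, G (f + g) = G f + G g := by
    intro f g
    funext x
    have h1 : ∀ ξ, σ ξ * torusFourierCoeff ((f + g : Lp ℂ p volume) :
          (Fin d → AddCircle (1 : ℝ)) → ℂ) ξ * torusChar ξ x =
        σ ξ * torusFourierCoeff (f : (Fin d → AddCircle (1 : ℝ)) → ℂ) ξ * torusChar ξ x +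
        σ ξ * torusFourierCoeff (g : (Fin d → AddCircle (1 : ℝ)) → ℂ) ξ * torusChar ξ x := by
      intro ξ
      have h2 := (coeffCLM p (d := d) ξ).map_add f g
      rw [coeffCLM_apply, coeffCLM_apply, coeffCLM_apply] at h2
      rw [h2]; ring
    simp only [hG, Pi.add_apply]
    rw [tsum_congr h1, Summable.tsum_add (summable_term p hσ1 f x) (summable_term p hσ1 g x)]
    ring
  have hGsmul : ∀ (c : ℂ) f, G (c • f) = c • G f := by
    intro c f
    funext x
    have h1 : ∀ ξ, σ ξ * torusFourierCoeff ((c • f : Lp ℂ p volume) :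
          (Fin d → AddCircle (1 : ℝ)) → ℂ) ξ * torusChar ξ x =
        c * (σ ξ * torusFourierCoeff (f : (Fin d → AddCircle (1 : ℝ)) → ℂ) ξ * torusChar ξ x) := by
      intro ξ
      have h2 := (coeffCLM p (d := d) ξ).map_smul c f
      rw [coeffCLM_apply, coeffCLM_apply] at h2
      rw [h2, smul_eq_mul]; ring
    simp only [hG, Pi.smul_apply, smul_eq_mul]
    rw [tsum_congr h1, tsum_mul_left]
    ring
  have memG' : ∀ f, MemLp (G f) q (volume : Measure (Fin d → AddCircle (1 : ℝ))) :=
    fun f => memG p q hα hσ1 f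
  set L : Lp ℂ p (volume : Measure (Fin d → AddCircle (1 : ℝ))) →ₗ[ℂ] Lp ℂ q volume :=
    { toFun := fun f => (memG' f).toLp (G f)
      map_add' := fun f g => by
        rw [← MemLp.toLp_add]
        exact MemLp.toLp_congr _ _ (Filter.EventuallyEq.of_eq (hGadd f g))
      map_smul' := fun c f => by
        simp only [RingHom.id_apply]
        rw [← MemLp.toLp_const_smul]
        exact MemLp.toLp_congr _ _ (Filter.EventuallyEq.of_eq (hGsmul c f)) } with hL
  have hLf : ∀ f, L f = (memG' f).toLp (G f) := fun f => rfl
  have hbound : ∀ f, ‖L f‖ ≤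
      ((∑' ξ, ‖σ ξ‖) * (eLpNorm α q (volume : Measure (Fin d → AddCircle (1 : ℝ)))).toReal) * ‖f‖ := by
    intro f
    have h0 : ‖L f‖ = (eLpNorm (G f) q (volume : Measure (Fin d → AddCircle (1 : ℝ)))).toReal := by
      rw [hLf f]; exact Lp.norm_toLp (G f) (memG' f)
    rw [h0]
    have hC : (0:ℝ) ≤ (∑' ξ, ‖σ ξ‖) * ‖f‖ :=
      mul_nonneg (tsum_nonneg fun _ => norm_nonneg _) (norm_nonneg _)
    have h1 := eLpNorm_alpha_mul_le q hα.1
      (fun x => ∑' ξ, σ ξ * torusFourierCoeff (f : (Fin d → AddCircle (1 : ℝ)) → ℂ) ξ *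
        torusChar ξ x)
      ((∑' ξ, ‖σ ξ‖) * ‖f‖) hC (norm_gsum_le p hσ1 f)
    have h2 := ENNReal.toReal_mono
      (ENNReal.mul_ne_top ENNReal.ofReal_ne_top hα.2.ne) h1
    rw [ENNReal.toReal_mul, ENNReal.toReal_ofReal hC] at h2
    calc (eLpNorm (G f) q (volume : Measure (Fin d → AddCircle (1 : ℝ)))).toReal
        ≤ (∑' ξ, ‖σ ξ‖) * ‖f‖ *
            (eLpNorm α q (volume : Measure (Fin d → AddCircle (1 : ℝ)))).toReal := h2
      _ = ((∑' ξ, ‖σ ξ‖) *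
            (eLpNorm α q (volume : Measure (Fin d → AddCircle (1 : ℝ)))).toReal) * ‖f‖ := by ring
  refine ⟨L.mkContinuous _ hbound, fun f => ?_, fun f => ?_⟩
  · have hTf : L.mkContinuous _ hbound f = (memG' f).toLp (G f) := by
      rw [LinearMap.mkContinuous_apply, hLf f]
    rw [hTf]
    exact MemLp.coeFn_toLp (memG' f)
  · have key : ∀ s : Finset (Fin d → ℤ),
        ‖(∑ ξ ∈ s, (σ ξ * coeffCLM p ξ f) • charLp q hα ξ) - L.mkContinuous _ hbound f‖ ≤
          (∑' ξ : {ξ // ξ ∉ s}, ‖σ ξ *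
              torusFourierCoeff (f : (Fin d → AddCircle (1 : ℝ)) → ℂ) ξ‖) *
            (eLpNorm α q (volume : Measure (Fin d → AddCircle (1 : ℝ)))).toReal := by
      intro s
      have hTf : L.mkContinuous _ hbound f = (memG' f).toLp (G f) := by
        rw [LinearMap.mkContinuous_apply, hLf f]
      rw [sum_toLp p q hα f s, hTf, ← MemLp.toLp_sub, Lp.norm_toLp]
      set tail : ℝ := ∑' ξ : {ξ // ξ ∉ s},
        ‖σ ξ * torusFourierCoeff (f : (Fin d → AddCircle (1 : ℝ)) → ℂ) ξ‖ with htail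
      have htail0 : 0 ≤ tail := tsum_nonneg fun _ => norm_nonneg _
      have hfun : ((fun x => ∑ ξ ∈ s, σ ξ *
              torusFourierCoeff (f : (Fin d → AddCircle (1 : ℝ)) → ℂ) ξ * (α x * torusChar ξ x))
            - G f)
          = fun x => α x * ((∑ ξ ∈ s, σ ξ *
              torusFourierCoeff (f : (Fin d → AddCircle (1 : ℝ)) → ℂ) ξ * torusChar ξ x) -
            ∑' ξ, σ ξ * torusFourierCoeff (f : (Fin d → AddCircle (1 : ℝ)) → ℂ) ξ *
              torusChar ξ x) := by
        funext x
        simp only [Pi.sub_apply, hG]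
        rw [mul_sub, Finset.mul_sum]
        congr 1
        exact Finset.sum_congr rfl fun ξ _ => by ring
      rw [hfun]
      have hptwise : ∀ x, ‖(∑ ξ ∈ s, σ ξ *
            torusFourierCoeff (f : (Fin d → AddCircle (1 : ℝ)) → ℂ) ξ * torusChar ξ x) -
          ∑' ξ, σ ξ * torusFourierCoeff (f : (Fin d → AddCircle (1 : ℝ)) → ℂ) ξ *
            torusChar ξ x‖ ≤ tail := by
        intro x
        have hsum := summable_term p hσ1 f x
        have hsplit := Summable.sum_add_tsum_subtype_compl hsum s
        have hdiff : (∑ ξ ∈ s, σ ξ *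
              torusFourierCoeff (f : (Fin d → AddCircle (1 : ℝ)) → ℂ) ξ * torusChar ξ x) -
            (∑' ξ, σ ξ * torusFourierCoeff (f : (Fin d → AddCircle (1 : ℝ)) → ℂ) ξ *
              torusChar ξ x)
            = -(∑' ξ : {ξ // ξ ∉ s}, σ (ξ : Fin d → ℤ) *
              torusFourierCoeff (f : (Fin d → AddCircle (1 : ℝ)) → ℂ) ξ * torusChar ξ x) := by
          rw [← hsplit]; ring
        rw [hdiff, norm_neg]
        have hsub : Summable fun ξ : {ξ // ξ ∉ s} => ‖σ (ξ : Fin d → ℤ) *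
            torusFourierCoeff (f : (Fin d → AddCircle (1 : ℝ)) → ℂ) ξ * torusChar ξ x‖ := by
          have := (hsum.norm).subtype {ξ | ξ ∉ s}
          exact this
        refine (norm_tsum_le_tsum_norm hsub).trans ?_
        rw [htail]
        refine le_of_eq (tsum_congr fun ξ => ?_)
        rw [norm_mul, norm_torusChar, mul_one]
      have h1 := eLpNorm_alpha_mul_le q hα.1 _ tail htail0 hptwise
      have h2 := ENNReal.toReal_mono
        (ENNReal.mul_ne_top ENNReal.ofReal_ne_top hα.2.ne) h1
      rw [ENNReal.toReal_mul, ENNReal.toReal_ofReal htail0] at h2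
      exact h2
    rw [HasSum, tendsto_iff_norm_sub_tendsto_zero]
    refine squeeze_zero (fun s => norm_nonneg _) key ?_
    have := (tendsto_tsum_compl_atTop_zero (fun ξ => ‖σ ξ *
        torusFourierCoeff (f : (Fin d → AddCircle (1 : ℝ)) → ℂ) ξ‖)).mul_const
      ((eLpNorm α q (volume : Measure (Fin d → AddCircle (1 : ℝ)))).toReal)
    rw [zero_mul] at this
    exact this

end RNuclearAux

set_option maxHeartbeats 2000000 in
open Filter Topology in
/-- For `α ∈ L^{p'}(𝕋^d) ∩ L^q(𝕋^d)` and `σ : ℤ^d → ℂ` with `Σ_ξ |σ(ξ)|^r < ∞`, the operator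
`α T_σ : f ↦ α · Σ_ξ σ(ξ) 𝓕f(ξ) e^{2πi x·ξ}` is a well-defined bounded operator from
`L^p(𝕋^d)` to `L^q(𝕋^d)` and is `r`-nuclear. -/
theorem multiplier_times_multiplication_isRNuclear
    (d : ℕ) (hd : 1 ≤ d)
    (p p' q : ℝ≥0∞) [Fact (1 ≤ p)] [Fact (1 ≤ q)] [Fact (1 ≤ p')]
    (hp : p ≠ ∞) (hq : q ≠ ∞) (hpp' : 1 / p + 1 / p' = 1)
    (r : ℝ) (hr0 : 0 < r) (hr1 : r ≤ 1)
    (α : (Fin d → AddCircle (1 : ℝ)) → ℂ)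
    (hα1 : MemLp α p' (volume : Measure (Fin d → AddCircle (1 : ℝ))))
    (hα2 : MemLp α q (volume : Measure (Fin d → AddCircle (1 : ℝ))))
    (σ : (Fin d → ℤ) → ℂ) (hσ : Summable fun ξ => ‖σ ξ‖ ^ r) :
    ∃ T : Lp ℂ p (volume : Measure (Fin d → AddCircle (1 : ℝ))) →L[ℂ] Lp ℂ q volume,
      (∀ f : Lp ℂ p (volume : Measure (Fin d → AddCircle (1 : ℝ))),
        ∀ᵐ x ∂(volume : Measure (Fin d → AddCircle (1 : ℝ))),
          (T f : (Fin d → AddCircle (1 : ℝ)) → ℂ) x =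
            α x * ∑' ξ : Fin d → ℤ,
              σ ξ * torusFourierCoeff (f : (Fin d → AddCircle (1 : ℝ)) → ℂ) ξ * torusChar ξ x) ∧
      IsRNuclear r T := by
  classical
  haveI : Nonempty (Fin d) := Fin.pos_iff_nonempty.mp hd
  have hσ1 : Summable fun ξ => ‖σ ξ‖ := by
    refine summable_of_isBigO hσ ?_
    rw [Asymptotics.isBigO_iff]
    refine ⟨1, ?_⟩
    have h0 : Tendsto (fun ξ => ‖σ ξ‖ ^ r) cofinite (𝓝 0) := hσ.tendsto_cofinite_zero
    filter_upwards [h0.eventually (gt_mem_nhds one_pos)] with ξ hξ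
    have hb : ‖σ ξ‖ ≤ 1 := by
      by_contra h
      push_neg at h
      have h2 : (1:ℝ) ≤ ‖σ ξ‖ ^ r := Real.one_le_rpow h.le hr0.le
      linarith
    rw [one_mul, Real.norm_eq_abs, Real.norm_eq_abs, abs_of_nonneg (norm_nonneg _),
      abs_of_nonneg (Real.rpow_nonneg (norm_nonneg _) _)]
    rcases eq_or_lt_of_le (norm_nonneg (σ ξ)) with h|h
    · rw [← h, Real.zero_rpow hr0.ne']
    · calc ‖σ ξ‖ = ‖σ ξ‖ ^ (1:ℝ) := (Real.rpow_one _).symm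
        _ ≤ ‖σ ξ‖ ^ r := Real.rpow_le_rpow_of_exponent_ge h hb hr1
  obtain ⟨T, hT1, hT2⟩ := RNuclearAux.core p q hα2 hσ1
  refine ⟨T, fun f => ?_, ?_⟩
  · filter_upwards [hT1 f] with x hx
    exact hx
  · obtain ⟨D⟩ := nonempty_denumerable (Fin d → ℤ)
    let e : ℕ ≃ (Fin d → ℤ) := (Denumerable.eqv (Fin d → ℤ)).symm
    refine ⟨fun n => σ (e n) • RNuclearAux.coeffCLM p (e n),
      fun n => RNuclearAux.charLp q hα2 (e n), ?_, ?_⟩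
    · set A := (eLpNorm α q (volume : Measure (Fin d → AddCircle (1 : ℝ)))).toReal with hA
      have hA0 : 0 ≤ A := ENNReal.toReal_nonneg
      have hle : ∀ n, ‖σ (e n) • RNuclearAux.coeffCLM p (e n)‖ ^ r *
          ‖RNuclearAux.charLp q hα2 (e n)‖ ^ r ≤ ‖σ (e n)‖ ^ r * A ^ r := by
        intro n
        have h1 : ‖σ (e n) • RNuclearAux.coeffCLM (d := d) p (e n)‖ ≤ ‖σ (e n)‖ := by
          rw [norm_smul (σ (e n)) (RNuclearAux.coeffCLM (d := d) p (e n))]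
          exact mul_le_of_le_one_right (norm_nonneg _) (RNuclearAux.norm_coeffCLM_le p (e n))
        have h2 : ‖RNuclearAux.charLp q hα2 (e n)‖ = A := RNuclearAux.norm_charLp q hα2 (e n)
        rw [h2]
        exact mul_le_mul_of_nonneg_right (Real.rpow_le_rpow (norm_nonneg _) h1 hr0.le)
          (Real.rpow_nonneg hA0 _)
      refine Summable.of_nonneg_of_le (fun n => mul_nonneg (Real.rpow_nonneg (norm_nonneg _) _)
        (Real.rpow_nonneg (norm_nonneg _) _)) hle ?_
      have hs : Summable fun ξ => ‖σ ξ‖ ^ r * A ^ r := hσ.mul_right _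
      exact e.summable_iff.mpr hs
    · intro f
      have h := (Equiv.hasSum_iff e (f := fun ξ => (σ ξ * RNuclearAux.coeffCLM p ξ f) •
          RNuclearAux.charLp q hα2 ξ)).mpr (hT2 f)
      have heq : (fun n => ((σ (e n) • RNuclearAux.coeffCLM p (e n)) f) •
            RNuclearAux.charLp q hα2 (e n))
          = (fun ξ => (σ ξ * RNuclearAux.coeffCLM p ξ f) •
            RNuclearAux.charLp q hα2 ξ) ∘ e := by
        funext n
        simp only [Function.comp_apply, ContinuousLinearMap.smul_apply, smul_eq_mul]
      rw [heq]
      exact h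
end

section
/- Let d ≥ 1, let 𝕋^d = (ℝ/ℤ)^d be the d-dimensional torus with its Haar (Lebesgue) probability measure, let 1 ≤ p, q < ∞ with 1/p + 1/p' = 1, let 0 < r ≤ 1 and let τ > 0 satisfy rτ > d. Let α ∈ L^{p'}(𝕋^d) ∩ L^q(𝕋^d). Then the operator α(I − Δ)^{−τ/2}, defined by (α(I−Δ)^{−τ/2} f)(x) = α(x) Σ_{ξ ∈ ℤ^d} (1 + 4π²|ξ|²)^{−τ/2} 𝓕f(ξ) e^{2πi x·ξ} where 𝓕f(ξ) = ∫_{𝕋^d} f(y) e^{−2πi y·ξ} dy, is a well-defined bounded linear operator from L^p(𝕋^d) to L^q(𝕋^d) and is r-nuclear. -/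
set_option maxHeartbeats 1000000


open MeasureTheory Real
open scoped ENNReal

noncomputable instance : IsProbabilityMeasure (volume : Measure (AddCircle (1:ℝ))) :=
  ⟨by rw [AddCircle.measure_univ]; simp⟩

lemma rpow_neg_anti {x y t : ℝ} (hx : 0 < x) (hxy : x ≤ y) (ht : 0 ≤ t) :
    y ^ (-t) ≤ x ^ (-t) := by
  rw [Real.rpow_neg (hx.le.trans hxy), Real.rpow_neg hx.le]
  exact inv_anti₀ (Real.rpow_pos_of_pos hx t) (Real.rpow_le_rpow hx.le hxy ht)

lemma summable_int_aux {t : ℝ} (ht : 1/2 < t) :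
    Summable (fun n : ℤ => (1 + (n:ℝ)^2)^(-t)) := by
  apply Summable.of_norm_bounded_eventually (g := fun n : ℤ => |(n:ℝ)|^(-(2*t)))
    (Real.summable_abs_int_rpow (by linarith))
  rw [Filter.eventually_cofinite]
  apply Set.Finite.subset (Set.finite_singleton (0:ℤ))
  intro n hn
  simp only [Set.mem_setOf_eq, not_le] at hn
  by_contra h0
  apply hn.not_ge
  have hne : n ≠ 0 := fun h => h0 (by simp [h])
  have hn1 : (1:ℝ) ≤ |(n:ℝ)| := by
    rw [← Int.cast_abs]; exact_mod_cast Int.one_le_abs hne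
  have h1 : |(n:ℝ)|^(-(2*t)) = ((n:ℝ)^2)^(-t) := by
    rw [show ((n:ℝ)^2) = |(n:ℝ)|^(2:ℕ) by rw [sq_abs], ← Real.rpow_natCast (|(n:ℝ)|) 2,
      ← Real.rpow_mul (abs_nonneg _)]
    norm_num
  have h2 : ‖(1 + (n:ℝ)^2)^(-t)‖ = (1 + (n:ℝ)^2)^(-t) := by
    rw [Real.norm_eq_abs, abs_of_nonneg (Real.rpow_nonneg (by positivity) _)]
  rw [h1, h2]
  exact rpow_neg_anti (by positivity) (by nlinarith [sq_nonneg (n:ℝ)]) (by linarith)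

lemma summable_pi_prod {f : ℤ → ℝ} (hf : Summable f) (hf0 : ∀ n, 0 ≤ f n) :
    ∀ d : ℕ, Summable (fun ξ : Fin d → ℤ => ∏ i, f (ξ i)) := by
  intro d
  induction d with
  | zero => exact .of_finite
  | succ d ih =>
      have h1 := (hf.mul_of_nonneg ih hf0 (fun ξ => Finset.prod_nonneg fun i _ => hf0 _))
      have h2 := ((Fin.consEquiv (fun _ : Fin (d+1) => ℤ)).symm.summable_iff
        (f := fun p : ℤ × (Fin d → ℤ) => f p.1 * ∏ i, f (p.2 i))).mpr h1
      apply h2.congr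
      intro ξ
      show f (ξ 0) * ∏ i, f (Fin.tail ξ i) = _
      rw [Fin.prod_univ_succ]
      rfl

lemma summable_bessel (d : ℕ) (s : ℝ) (hs : (d:ℝ) < 2*s) :
    Summable (fun ξ : Fin d → ℤ => (1 + 4*π^2 * ∑ i, ((ξ i:ℝ))^2)^(-s)) := by
  rcases Nat.eq_zero_or_pos d with rfl | hd
  · exact .of_finite
  have hdR : (0:ℝ) < d := by exact_mod_cast hd
  set t : ℝ := s / d with htdef
  have hs0 : 0 < s := by nlinarith
  have ht : 1/2 < t := by rw [htdef, lt_div_iff₀ hdR]; linarith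
  have ht0 : 0 ≤ t := by linarith
  have hf0 : ∀ n : ℤ, 0 ≤ (1 + (n:ℝ)^2)^(-t) := fun n => Real.rpow_nonneg (by positivity) _
  apply Summable.of_nonneg_of_le
    (fun ξ => Real.rpow_nonneg (by positivity) _)
    (fun ξ => ?_) (summable_pi_prod (summable_int_aux ht) hf0 d)
  have hA : (0:ℝ) ≤ ∑ i, ((ξ i:ℝ))^2 := Finset.sum_nonneg fun i _ => sq_nonneg _
  have step1 : (1 + 4*π^2 * ∑ i, ((ξ i:ℝ))^2)^(-s) ≤ (1 + ∑ i, ((ξ i:ℝ))^2)^(-s) := by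
    apply rpow_neg_anti (by positivity)
      (by nlinarith [Real.pi_gt_three,
        mul_nonneg (show (0:ℝ) ≤ 4*π^2-1 by nlinarith [Real.pi_gt_three]) hA]) hs0.le
  refine step1.trans ?_
  have hprod : ∏ i, (1 + ((ξ i:ℝ))^2) ≤ (1 + ∑ i, ((ξ i:ℝ))^2)^(d:ℕ) := by
    calc ∏ i, (1 + ((ξ i:ℝ))^2) ≤ ∏ _i : Fin d, (1 + ∑ j, ((ξ j:ℝ))^2) := by
          apply Finset.prod_le_prod (fun i _ => by positivity)
          intro i _
          have : ((ξ i:ℝ))^2 ≤ ∑ j, ((ξ j:ℝ))^2 :=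
            Finset.single_le_sum (f := fun j : Fin d => ((ξ j:ℝ))^2)
              (fun j _ => sq_nonneg _) (Finset.mem_univ i)
          linarith
      _ = (1 + ∑ j, ((ξ j:ℝ))^2)^(d:ℕ) := by simp
  have hrw : (1 + ∑ i, ((ξ i:ℝ))^2)^(-s) = ((1 + ∑ i, ((ξ i:ℝ))^2)^(d:ℕ))^(-t) := by
    rw [← Real.rpow_natCast (1 + ∑ i, ((ξ i:ℝ))^2) d, ← Real.rpow_mul (by positivity)]
    congr 1
    rw [htdef]
    field_simp
  have hrw2 : ∏ i, (1 + ((ξ i:ℝ))^2)^(-t) = (∏ i, (1 + ((ξ i:ℝ))^2))^(-t) := by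
    rw [← Real.finset_prod_rpow _ _ (fun i _ => by positivity)]
  rw [hrw, hrw2]
  exact rpow_neg_anti (Finset.prod_pos fun i _ => by positivity) hprod ht0


/-- The Bessel potential symbol `σ(ξ) = (1 + 4π²|ξ|²)^{-τ/2}` on `ℤ^d`. -/
noncomputable def besselSymbol {d : ℕ} (τ : ℝ) (ξ : Fin d → ℤ) : ℂ :=
  ((1 + 4 * π ^ 2 * ∑ i, (ξ i : ℝ) ^ 2) ^ (-(τ / 2)) : ℝ)

lemma torusChar_continuous {d : ℕ} (ξ : Fin d → ℤ) : Continuous (torusChar (d := d) ξ) :=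
  continuous_finset_prod _ fun i _ => (fourier (ξ i)).continuous.comp (continuous_apply i)

lemma torusChar_norm {d : ℕ} (ξ : Fin d → ℤ) (x : Fin d → AddCircle (1:ℝ)) :
    ‖torusChar ξ x‖ = 1 := by
  rw [torusChar, norm_prod]
  refine Finset.prod_eq_one fun i _ => ?_
  exact Circle.norm_coe _


/-- For `α ∈ L^{p'}(𝕋^d) ∩ L^q(𝕋^d)`, `0 < r ≤ 1` and `τ > 0` with `rτ > d`, the operator
`α (I - Δ)^{-τ/2} : f ↦ α · Σ_ξ (1 + 4π²|ξ|²)^{-τ/2} 𝓕f(ξ) e^{2πi x·ξ}` is a well-defined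
bounded operator from `L^p(𝕋^d)` to `L^q(𝕋^d)` and is `r`-nuclear. -/
theorem bessel_potential_multiplication_isRNuclear
    (d : ℕ) (hd : 1 ≤ d)
    (p p' q : ℝ≥0∞) [Fact (1 ≤ p)] [Fact (1 ≤ q)] [Fact (1 ≤ p')]
    (hp : p ≠ ∞) (hq : q ≠ ∞) (hpp' : 1 / p + 1 / p' = 1)
    (r : ℝ) (hr0 : 0 < r) (hr1 : r ≤ 1)
    (τ : ℝ) (hτ : 0 < τ) (hrτ : (d : ℝ) < r * τ)
    (α : (Fin d → AddCircle (1 : ℝ)) → ℂ)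
    (hα1 : MemLp α p' (volume : Measure (Fin d → AddCircle (1 : ℝ))))
    (hα2 : MemLp α q (volume : Measure (Fin d → AddCircle (1 : ℝ)))) :
    ∃ T : Lp ℂ p (volume : Measure (Fin d → AddCircle (1 : ℝ))) →L[ℂ] Lp ℂ q volume,
      (∀ f : Lp ℂ p (volume : Measure (Fin d → AddCircle (1 : ℝ))),
        ∀ᵐ x ∂(volume : Measure (Fin d → AddCircle (1 : ℝ))),
          (T f : (Fin d → AddCircle (1 : ℝ)) → ℂ) x =
            α x * ∑' ξ : Fin d → ℤ,
              besselSymbol τ ξ * torusFourierCoeff (f : (Fin d → AddCircle (1 : ℝ)) → ℂ) ξ *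
                torusChar ξ x) ∧
      IsRNuclear r T := by
  classical
  set μ : Measure (Fin d → AddCircle (1 : ℝ)) := volume with hμdef
  have hq1 : (1:ℝ≥0∞) ≤ q := Fact.out
  have hp1 : (1:ℝ≥0∞) ≤ p := Fact.out
  -- the symbol
  set σ : (Fin d → ℤ) → ℝ := fun ξ => (1 + 4*π^2 * ∑ i, ((ξ i:ℝ))^2)^(-(τ/2)) with hσdef
  have hσpos : ∀ ξ, 0 < σ ξ := fun ξ => Real.rpow_pos_of_pos (by positivity) _
  have hσle1 : ∀ ξ, σ ξ ≤ 1 := by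
    intro ξ
    have hA : (0:ℝ) ≤ ∑ i, ((ξ i:ℝ))^2 := Finset.sum_nonneg fun i _ => sq_nonneg _
    exact Real.rpow_le_one_of_one_le_of_nonpos (by nlinarith) (by linarith)
  have hbnorm : ∀ ξ : Fin d → ℤ, ‖besselSymbol (d := d) τ ξ‖ = σ ξ := by
    intro ξ
    rw [besselSymbol, Complex.norm_real, Real.norm_eq_abs, abs_of_pos (hσpos ξ)]
  -- summability of σ^r
  have hσr : Summable (fun ξ : Fin d → ℤ => (σ ξ)^r) := by
    have := summable_bessel d (r*τ/2) (by linarith)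
    apply this.congr
    intro ξ
    simp only [hσdef]
    rw [← Real.rpow_mul (by positivity)]
    congr 1
    ring
  -- integral bound
  have hL1le : ∀ f : Lp ℂ p μ, ∫ y, ‖f y‖ ∂μ ≤ ‖f‖ := by
    intro f
    have hfi : Integrable (⇑f) μ := (Lp.memLp f).integrable hp1
    have h1 : ENNReal.ofReal (∫ y, ‖f y‖ ∂μ) = eLpNorm (⇑f) 1 μ := by
      rw [ofReal_integral_norm_eq_lintegral_enorm hfi, eLpNorm_one_eq_lintegral_enorm]
    have h2 : eLpNorm (⇑f) 1 μ ≤ eLpNorm (⇑f) p μ :=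
      eLpNorm_le_eLpNorm_of_exponent_le hp1 (Lp.aestronglyMeasurable f)
    rw [Lp.norm_def]
    rw [← ENNReal.toReal_ofReal (integral_nonneg (fun y => norm_nonneg _)), h1]
    exact ENNReal.toReal_mono (Lp.eLpNorm_ne_top f) h2
  -- integrability of f * char
  have hint : ∀ (f : Lp ℂ p μ) (ξ : Fin d → ℤ),
      Integrable (fun y => f y * torusChar ξ y) μ := by
    intro f ξ
    have hfi : Integrable (⇑f) μ := (Lp.memLp f).integrable hp1
    have := hfi.bdd_mul (torusChar_continuous ξ).aestronglyMeasurable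
      (c := 1) (Filter.Eventually.of_forall fun x => (torusChar_norm ξ x).le)
    exact this.congr (Filter.Eventually.of_forall fun x => mul_comm _ _)
  -- the functionals
  have hΦbound : ∀ (ξ : Fin d → ℤ) (f : Lp ℂ p μ),
      ‖besselSymbol (d := d) τ ξ * ∫ y, f y * torusChar (-ξ) y ∂μ‖ ≤ σ ξ * ‖f‖ := by
    intro ξ f
    rw [norm_mul, hbnorm]
    refine mul_le_mul_of_nonneg_left ?_ (hσpos ξ).le
    calc ‖∫ y, f y * torusChar (-ξ) y ∂μ‖ ≤ ∫ y, ‖f y * torusChar (-ξ) y‖ ∂μ :=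
          norm_integral_le_integral_norm _
      _ = ∫ y, ‖f y‖ ∂μ := by
          refine integral_congr_ae (Filter.Eventually.of_forall fun y => ?_)
          simp only [norm_mul, torusChar_norm, mul_one]
      _ ≤ ‖f‖ := hL1le f
  let Φ : (Fin d → ℤ) → (Lp ℂ p μ →L[ℂ] ℂ) := fun ξ =>
    LinearMap.mkContinuous
      { toFun := fun f => besselSymbol (d := d) τ ξ * ∫ y, f y * torusChar (-ξ) y ∂μ
        map_add' := by
          intro f g
          have h1 : (⇑(f+g) : _ → ℂ) =ᵐ[μ] ⇑f + ⇑g := Lp.coeFn_add f g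
          have : (∫ y, (f+g) y * torusChar (-ξ) y ∂μ)
              = ∫ y, (f y * torusChar (-ξ) y + g y * torusChar (-ξ) y) ∂μ := by
            refine integral_congr_ae ?_
            filter_upwards [h1] with y hy
            rw [hy]; simp [add_mul]
          rw [this, integral_add (hint f _) (hint g _)]
          ring
        map_smul' := by
          intro c f
          have h1 : (⇑(c • f) : _ → ℂ) =ᵐ[μ] c • ⇑f := Lp.coeFn_smul c f
          have : (∫ y, (c • f) y * torusChar (-ξ) y ∂μ)
              = ∫ y, c • (f y * torusChar (-ξ) y) ∂μ := by
            refine integral_congr_ae ?_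
            filter_upwards [h1] with y hy
            rw [hy]; simp [smul_eq_mul]; ring
          rw [this, integral_smul]
          simp [smul_eq_mul]; ring }
      (σ ξ) (fun f => hΦbound ξ f)
  have hΦnorm : ∀ ξ, ‖Φ ξ‖ ≤ σ ξ := fun ξ =>
    LinearMap.mkContinuous_norm_le _ (hσpos ξ).le _
  have hΦapply : ∀ (ξ : Fin d → ℤ) (f : Lp ℂ p μ),
      Φ ξ f = besselSymbol (d := d) τ ξ * torusFourierCoeff (⇑f) ξ := fun ξ f => rfl
  -- the L^q functions
  have hyl : ∀ ξ : Fin d → ℤ, MemLp (fun x => α x * torusChar ξ x) q μ := by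
    intro ξ
    refine hα2.of_le (hα2.1.mul (torusChar_continuous ξ).aestronglyMeasurable) ?_
    refine Filter.Eventually.of_forall fun x => ?_
    rw [norm_mul, torusChar_norm, mul_one]
  let Y : (Fin d → ℤ) → Lp ℂ q μ := fun ξ => (hyl ξ).toLp _
  set Cα : ℝ := (eLpNorm α q μ).toReal with hCαdef
  have hCα0 : 0 ≤ Cα := ENNReal.toReal_nonneg
  have hYnorm : ∀ ξ, ‖Y ξ‖ ≤ Cα := by
    intro ξ
    rw [Lp.norm_toLp]
    refine ENNReal.toReal_mono hα2.2.ne (eLpNorm_mono fun x => ?_)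
    rw [norm_mul, torusChar_norm, mul_one]
  have hYcoe : ∀ ξ : Fin d → ℤ, (⇑(Y ξ) : _ → ℂ) =ᵐ[μ] fun x => α x * torusChar ξ x :=
    fun ξ => (hyl ξ).coeFn_toLp
  -- the rank one operators
  let Top : (Fin d → ℤ) → (Lp ℂ p μ →L[ℂ] Lp ℂ q μ) := fun ξ => (Φ ξ).smulRight (Y ξ)
  have hTopnorm : ∀ ξ, ‖Top ξ‖ ≤ σ ξ * Cα := by
    intro ξ
    rw [ContinuousLinearMap.norm_smulRight_apply]
    exact mul_le_mul (hΦnorm ξ) (hYnorm ξ) (norm_nonneg _) (hσpos ξ).le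
  -- summability
  have hσ1 : Summable σ := by
    refine Summable.of_nonneg_of_le (fun ξ => (hσpos ξ).le) (fun ξ => ?_) hσr
    have := Real.rpow_le_rpow_of_exponent_ge (hσpos ξ) (hσle1 ξ) hr1
    rwa [Real.rpow_one] at this
  have hTopsum : Summable Top :=
    Summable.of_norm_bounded (hσ1.mul_right Cα) hTopnorm
  set T : Lp ℂ p μ →L[ℂ] Lp ℂ q μ := ∑' ξ, Top ξ with hTdef
  have hTsum : HasSum Top T := hTopsum.hasSum
  have hTapp : ∀ f : Lp ℂ p μ, HasSum (fun ξ => (Φ ξ f) • Y ξ) (T f) := by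
    intro f
    have := hTsum.mapL (ContinuousLinearMap.apply ℂ (Lp ℂ q μ) f)
    exact this
  -- pointwise formula
  have hTf : ∀ f : Lp ℂ p μ, HasSum (fun ξ => Top ξ f) (T f) := by
    intro f
    exact hTsum.mapL (ContinuousLinearMap.apply ℂ (Lp ℂ q μ) f)
  have hformula : ∀ f : Lp ℂ p μ, ∀ᵐ x ∂μ,
      (T f : _ → ℂ) x = α x * ∑' ξ : Fin d → ℤ,
        besselSymbol τ ξ * torusFourierCoeff (⇑f) ξ * torusChar ξ x := by
    intro f
    set c : (Fin d → ℤ) → ℂ := fun ξ => besselSymbol (d:=d) τ ξ * torusFourierCoeff (⇑f) ξ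
      with hcdef
    have hcnorm : ∀ ξ, ‖c ξ‖ ≤ σ ξ * ‖f‖ := fun ξ => hΦbound ξ f
    have hcs : Summable (fun ξ => ‖c ξ‖) :=
      Summable.of_nonneg_of_le (fun ξ => norm_nonneg _) hcnorm (hσ1.mul_right ‖f‖)
    set g : (Fin d → AddCircle (1:ℝ)) → ℂ := fun x => ∑' ξ, c ξ * torusChar ξ x with hgdef
    have hg_cont : Continuous g := by
      refine continuous_tsum (fun ξ => continuous_const.mul (torusChar_continuous ξ)) hcs ?_
      intro ξ x
      rw [norm_mul, torusChar_norm, mul_one]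
    set G : (Fin d → AddCircle (1:ℝ)) → ℂ := fun x => α x * g x with hGdef
    have hGm : AEStronglyMeasurable G μ := hα2.1.mul hg_cont.aestronglyMeasurable
    have hsumx : ∀ x, Summable (fun ξ => c ξ * (α x * torusChar ξ x)) := by
      intro x
      refine Summable.of_norm_bounded (g := fun ξ => ‖c ξ‖ * ‖α x‖) (hcs.mul_right _) ?_
      intro ξ
      simp only [norm_mul, torusChar_norm, mul_one, le_refl]
    have hGsum : ∀ x, G x = ∑' ξ, c ξ * (α x * torusChar ξ x) := by
      intro x
      rw [hGdef]
      dsimp only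
      rw [hgdef]
      dsimp only
      rw [← tsum_mul_left]
      exact tsum_congr fun ξ => by ring
    -- partial sums
    have key : ∀ F : Finset (Fin d → ℤ), (⇑(∑ ξ ∈ F, Top ξ f) : _ → ℂ)
        =ᵐ[μ] fun x => ∑ ξ ∈ F, c ξ * (α x * torusChar ξ x) := by
      intro F
      induction F using Finset.induction_on with
      | empty => simpa [Pi.zero_def] using Lp.coeFn_zero (E := ℂ) (p := q) (μ := μ)
      | @insert a F ha ih =>
          rw [Finset.sum_insert ha]
          have h1 := Lp.coeFn_add (Top a f) (∑ ξ ∈ F, Top ξ f)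
          have h2 := Lp.coeFn_smul (Φ a f) (Y a)
          filter_upwards [h1, h2, ih, hYcoe a] with x hx1 hx2 hx3 hx4
          rw [hx1]
          simp only [Pi.add_apply]
          rw [Finset.sum_insert ha]
          have hTopa : (⇑(Top a f) : _ → ℂ) x = c a * (α x * torusChar a x) := by
            calc (⇑(Top a f) : _ → ℂ) x = (⇑((Φ a f) • Y a) : _ → ℂ) x := rfl
              _ = ((Φ a f) • (⇑(Y a) : _ → ℂ)) x := hx2
              _ = (Φ a f) * (⇑(Y a) x) := by simp [Pi.smul_apply, smul_eq_mul]
              _ = (Φ a f) * (α x * torusChar a x) := by rw [hx4]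
              _ = c a * (α x * torusChar a x) := by rw [hΦapply]
          rw [hTopa, hx3]
    -- tail bound
    have hbound : ∀ F : Finset (Fin d → ℤ),
        eLpNorm ((⇑(T f) : _ → ℂ) - G) q μ ≤
          ENNReal.ofReal ‖T f - ∑ ξ ∈ F, Top ξ f‖ +
            ENNReal.ofReal (∑' ξ : {ξ : Fin d → ℤ // ξ ∉ F}, ‖c ξ.1‖) * eLpNorm α q μ := by
      intro F
      set tF : ℝ := ∑' ξ : {ξ : Fin d → ℤ // ξ ∉ F}, ‖c ξ.1‖ with htFdef
      have htF0 : 0 ≤ tF := tsum_nonneg fun ξ => norm_nonneg _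
      have hdecomp : (⇑(T f) : _ → ℂ) - G =
          ((⇑(T f) : _ → ℂ) - ⇑(∑ ξ ∈ F, Top ξ f)) + ((⇑(∑ ξ ∈ F, Top ξ f) : _ → ℂ) - G) := by
        funext x; simp only [Pi.add_apply, Pi.sub_apply]; ring
      rw [hdecomp]
      refine le_trans (eLpNorm_add_le
        ((Lp.aestronglyMeasurable (T f)).sub (Lp.aestronglyMeasurable _))
        ((Lp.aestronglyMeasurable _).sub hGm) hq1) ?_
      gcongr
      · -- first term
        have : eLpNorm ((⇑(T f) : _ → ℂ) - ⇑(∑ ξ ∈ F, Top ξ f)) q μ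
            = eLpNorm (⇑(T f - ∑ ξ ∈ F, Top ξ f)) q μ :=
          eLpNorm_congr_ae (Lp.coeFn_sub _ _).symm
        rw [this, Lp.norm_def, ENNReal.ofReal_toReal (Lp.eLpNorm_ne_top _)]
      · -- second term
        have hae : ∀ᵐ x ∂μ, ‖((⇑(∑ ξ ∈ F, Top ξ f) : _ → ℂ) - G) x‖ ≤ ‖tF • α x‖ := by
          filter_upwards [key F] with x hx
          simp only [Pi.sub_apply]
          rw [hx, hGsum x]
          have hsplit : (∑ ξ ∈ F, c ξ * (α x * torusChar ξ x)) +
              (∑' ξ : {ξ : Fin d → ℤ // ξ ∉ F}, c ξ.1 * (α x * torusChar ξ.1 x))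
              = ∑' ξ, c ξ * (α x * torusChar ξ x) := (hsumx x).sum_add_tsum_compl (s := F)
          have : (∑ ξ ∈ F, c ξ * (α x * torusChar ξ x)) - (∑' ξ, c ξ * (α x * torusChar ξ x))
              = -(∑' ξ : {ξ : Fin d → ℤ // ξ ∉ F}, c ξ.1 * (α x * torusChar ξ.1 x)) := by
            rw [← hsplit]; ring
          rw [this, norm_neg]
          calc ‖∑' ξ : {ξ : Fin d → ℤ // ξ ∉ F}, c ξ.1 * (α x * torusChar ξ.1 x)‖
              ≤ ∑' ξ : {ξ : Fin d → ℤ // ξ ∉ F}, ‖c ξ.1 * (α x * torusChar ξ.1 x)‖ :=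
                norm_tsum_le_tsum_norm (((hsumx x).norm).subtype _)
            _ = ∑' ξ : {ξ : Fin d → ℤ // ξ ∉ F}, ‖c ξ.1‖ * ‖α x‖ := by
                refine tsum_congr fun ξ => ?_
                simp only [norm_mul, torusChar_norm, mul_one]
            _ = tF * ‖α x‖ := tsum_mul_right
            _ = ‖tF • α x‖ := by
                rw [norm_smul, Real.norm_eq_abs, abs_of_nonneg htF0]
        refine le_trans (eLpNorm_mono_ae hae) ?_
        refine le_trans (eLpNorm_const_smul_le (𝕜 := ℝ) (c := tF) (f := α)) ?_
        gcongr
        rw [Real.enorm_eq_ofReal htF0]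
    -- limit
    have htail : Filter.Tendsto
        (fun F : Finset (Fin d → ℤ) => ∑' ξ : {ξ : Fin d → ℤ // ξ ∉ F}, ‖c ξ.1‖)
        Filter.atTop (nhds 0) := tendsto_tsum_compl_atTop_zero fun ξ => ‖c ξ‖
    have hnrm : Filter.Tendsto (fun F : Finset (Fin d → ℤ) => ‖T f - ∑ ξ ∈ F, Top ξ f‖)
        Filter.atTop (nhds 0) := by
      have hTend : Filter.Tendsto (fun F : Finset (Fin d → ℤ) => ∑ ξ ∈ F, Top ξ f)
          Filter.atTop (nhds (T f)) := hTf f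
      have h0 := (tendsto_const_nhds
        (x := T f) (f := Filter.atTop (α := Finset (Fin d → ℤ)))).sub hTend
      rw [sub_self] at h0
      simpa using h0.norm
    have hlim : Filter.Tendsto (fun F : Finset (Fin d → ℤ) =>
        ENNReal.ofReal ‖T f - ∑ ξ ∈ F, Top ξ f‖ +
          ENNReal.ofReal (∑' ξ : {ξ : Fin d → ℤ // ξ ∉ F}, ‖c ξ.1‖) * eLpNorm α q μ)
        Filter.atTop (nhds 0) := by
      have l1 := (ENNReal.tendsto_ofReal hnrm)
      have l2 := ENNReal.Tendsto.mul_const (ENNReal.tendsto_ofReal htail) (Or.inr hα2.2.ne)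
      rw [ENNReal.ofReal_zero] at l1 l2
      rw [zero_mul] at l2
      have l3 := l1.add l2
      rw [add_zero] at l3
      exact l3
    have hzero : eLpNorm ((⇑(T f) : _ → ℂ) - G) q μ = 0 :=
      le_antisymm (ge_of_tendsto' hlim hbound) (zero_le)
    have haesub : AEStronglyMeasurable ((⇑(T f) : _ → ℂ) - G) μ :=
      (Lp.aestronglyMeasurable (T f)).sub hGm
    have := (eLpNorm_eq_zero_iff haesub (lt_of_lt_of_le zero_lt_one hq1).ne').mp hzero
    filter_upwards [this] with x hx
    have h0 : (T f : _ → ℂ) x - G x = 0 := hx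
    have hTG : (T f : _ → ℂ) x = G x := sub_eq_zero.mp h0
    exact hTG
  -- conclusion
  haveI : Nonempty (Fin d) := Fin.pos_iff_nonempty.mp hd
  haveI hinf : Infinite (Fin d → ℤ) := by infer_instance
  haveI henc : Encodable (Fin d → ℤ) := Encodable.ofCountable _
  haveI hden : Denumerable (Fin d → ℤ) := Denumerable.ofEncodableOfInfinite _
  let e : ℕ ≃ (Fin d → ℤ) := (Denumerable.eqv (Fin d → ℤ)).symm
  refine ⟨T, hformula, fun n => Φ (e n), fun n => Y (e n), ?_, ?_⟩
  · refine Summable.of_nonneg_of_le (fun n => ?_) (fun n => ?_)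
      ((Equiv.summable_iff e).mpr (hσr.mul_right (Cα^r)))
    · exact mul_nonneg (Real.rpow_nonneg (norm_nonneg _) _)
        (Real.rpow_nonneg (norm_nonneg _) _)
    · exact mul_le_mul (Real.rpow_le_rpow (norm_nonneg _) (hΦnorm _) hr0.le)
        (Real.rpow_le_rpow (norm_nonneg _) (hYnorm _) hr0.le)
        (Real.rpow_nonneg (norm_nonneg _) _) (Real.rpow_nonneg (hσpos _).le _)
  · intro x
    exact (Equiv.hasSum_iff e).mpr (hTapp x)
end
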